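/- Let I be a finite index set and let h, (h_i)_{i∈I}, (B_i)_{i∈I} be mutually independent real random variables on a probability space, where h and each h_i are exponentially distributed with rate 1 and each B_i is Bernoulli with parameter p ∈ [0,1]. Then for any constants c ≥ 0 and a_i ≥ 0 (i ∈ I), P( h > c·∑_{i∈I} B_i·h_i·a_i ) = ∏_{i∈I} ( p/(1 + c·a_i) + (1−p) ). -/

import Mathlib

open MeasureTheory ProbabilityTheory Set Real
open scoped ENNReal NNReal

lemma aux_exp_moment {Ω : Type*} [MeasurableSpace Ω] (μ : Measure Ω) [IsProbabilityMeasure μ]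
    (X : Ω → ℝ) (hX : Measurable X)
    (htail : ∀ x : ℝ, 0 ≤ x → μ {ω | X ω > x} = ENNReal.ofReal (Real.exp (-x)))
    (l : ℝ) (hl : 0 ≤ l) :
    ∫⁻ ω, ENNReal.ofReal (Real.exp (-(l * X ω))) ∂μ = ENNReal.ofReal (1 / (1 + l)) := by
  rcases hl.eq_or_lt with rfl | hl
  · simp
  -- tail facts
  have hle : ∀ s : ℝ, 0 ≤ s → μ {ω | X ω ≤ s} = 1 - ENNReal.ofReal (Real.exp (-s)) := by
    intro s hs
    have : {ω | X ω ≤ s} = {ω | X ω > s}ᶜ := by ext ω; simp [not_lt]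
    rw [this, measure_compl (measurableSet_lt measurable_const hX) (measure_ne_top _ _),
      htail s hs, measure_univ]
  rw [lintegral_eq_lintegral_meas_le μ (f := fun ω => Real.exp (-(l * X ω))) (Filter.Eventually.of_forall fun ω => (Real.exp_pos _).le)
    ((Real.measurable_exp.comp ((measurable_const.mul hX).neg)).aemeasurable)]
  have key : ∀ t ∈ Ioi (0:ℝ), μ {ω | t ≤ Real.exp (-(l * X ω))} =
      1 - ENNReal.ofReal (t ^ (1/l)) := by
    intro t ht
    have ht' : (0:ℝ) < t := ht
    have hset : {ω | t ≤ Real.exp (-(l * X ω))} = {ω | X ω ≤ -Real.log t / l} := by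
      ext ω
      rw [Set.mem_setOf_eq, Set.mem_setOf_eq, ← Real.log_le_iff_le_exp ht',
        le_div_iff₀ hl]
      constructor <;> intro h' <;> nlinarith
    rw [hset]
    rcases le_or_gt t 1 with ht1 | ht1
    · have hs : 0 ≤ -Real.log t / l :=
        div_nonneg (neg_nonneg.2 (Real.log_nonpos ht'.le ht1)) hl.le
      rw [hle _ hs]
      congr 2
      rw [Real.rpow_def_of_pos ht']
      congr 1
      field_simp
    · have h1 : (1:ℝ) ≤ t ^ (1/l) :=
        Real.one_le_rpow ht1.le (by positivity)
      have hzero : μ {ω | X ω ≤ -Real.log t / l} = 0 := by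
        have hsub : {ω | X ω ≤ -Real.log t / l} ⊆ {ω | X ω ≤ 0} := by
          intro ω hw
          have : -Real.log t / l ≤ 0 := by
            apply div_nonpos_of_nonpos_of_nonneg _ hl.le
            simp [Real.log_nonneg ht1.le]
          exact le_trans hw this
        have h0 : μ {ω | X ω ≤ 0} = 0 := by rw [hle 0 le_rfl]; simp
        exact measure_mono_null hsub h0
      rw [hzero, eq_comm, tsub_eq_zero_iff_le]
      exact le_trans (by norm_num) (ENNReal.ofReal_le_ofReal h1)
  rw [setLIntegral_congr_fun measurableSet_Ioi key]
  -- split Ioi 0 = Ioc 0 1 ∪ Ioi 1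
  have hsplit : (Ioi (0:ℝ)) = Ioc (0:ℝ) 1 ∪ Ioi 1 := by
    ext t; simp only [mem_Ioi, mem_union, mem_Ioc]
    constructor
    · intro h'; rcases le_or_gt t 1 with h1 | h1; exacts [Or.inl ⟨h', h1⟩, Or.inr h1]
    · rintro (⟨h1, _⟩ | h1); exacts [h1, by linarith]
  rw [hsplit, lintegral_union measurableSet_Ioi (by
    rw [Set.disjoint_left]; intro t ht1 ht2
    exact absurd ht1.2 (not_le.2 ht2))]
  have hIoi1 : ∫⁻ t in Ioi (1:ℝ), (1 - ENNReal.ofReal (t ^ (1/l))) = 0 := by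
    rw [setLIntegral_congr_fun measurableSet_Ioi
      (fun t (ht : 1 < t) => ?_), lintegral_zero]
    have h1 : (1:ℝ) ≤ t ^ (1/l) := Real.one_le_rpow ht.le (by positivity)
    rw [tsub_eq_zero_iff_le]
    exact le_trans (by norm_num) (ENNReal.ofReal_le_ofReal h1)
  rw [hIoi1, add_zero]
  -- on Ioc 0 1
  have hcong : ∀ t ∈ Ioc (0:ℝ) 1, (1 - ENNReal.ofReal (t ^ (1/l))) =
      ENNReal.ofReal (1 - t ^ (1/l)) := by
    intro t ht
    rw [ENNReal.ofReal_sub _ (Real.rpow_nonneg ht.1.le _), ENNReal.ofReal_one]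
  rw [setLIntegral_congr_fun measurableSet_Ioc hcong]
  have hint : IntervalIntegrable (fun t : ℝ => 1 - t ^ (1/l)) volume 0 1 := by
    apply IntervalIntegrable.sub intervalIntegrable_const
    exact intervalIntegral.intervalIntegrable_rpow (Or.inl (by positivity))
  have hInt : IntegrableOn (fun t : ℝ => 1 - t ^ (1/l)) (Ioc 0 1) volume := by
    rw [← intervalIntegrable_iff_integrableOn_Ioc_of_le (by norm_num : (0:ℝ) ≤ 1)]
    exact hint
  rw [← ofReal_integral_eq_lintegral_ofReal hInt (by
    rw [Filter.EventuallyLE, ae_restrict_iff' measurableSet_Ioc]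
    refine Filter.Eventually.of_forall fun t ht => ?_
    have : t ^ (1/l) ≤ 1 := Real.rpow_le_one ht.1.le ht.2 (by positivity)
    simp only [Pi.zero_apply]; linarith)]
  congr 1
  rw [← intervalIntegral.integral_of_le (by norm_num : (0:ℝ) ≤ 1),
    intervalIntegral.integral_sub intervalIntegrable_const
      (intervalIntegral.intervalIntegrable_rpow (Or.inl (by positivity))),
    intervalIntegral.integral_const, integral_rpow (Or.inl (by have := one_div_pos.mpr hl; linarith))]
  have h0 : (0:ℝ) ^ (1/l + 1) = 0 := Real.zero_rpow (by positivity)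
  have h1 : (1:ℝ) ^ (1/l + 1) = 1 := Real.one_rpow _
  rw [h0, h1]
  have hl1 : 1 + l ≠ 0 := by positivity
  have hl' : l ≠ 0 := ne_of_gt hl
  field_simp
  simp only [sub_zero, smul_eq_mul]; ring


lemma aux_prob_gt {Ω : Type*} [MeasurableSpace Ω] (μ : Measure Ω) [IsProbabilityMeasure μ]
    (h T : Ω → ℝ) (hh : Measurable h) (hT : Measurable T)
    (hind : IndepFun T h μ) (hTnn : 0 ≤ᵐ[μ] T)
    (htail : ∀ x : ℝ, 0 ≤ x → μ {ω | h ω > x} = ENNReal.ofReal (Real.exp (-x))) :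
    μ {ω | h ω > T ω} = ∫⁻ ω, ENNReal.ofReal (Real.exp (-T ω)) ∂μ := by
  have hs : MeasurableSet {q : ℝ × ℝ | q.1 < q.2} :=
    measurableSet_lt measurable_fst measurable_snd
  have hmap : μ.map (fun ω => (T ω, h ω)) = (μ.map T).prod (μ.map h) :=
    (indepFun_iff_map_prod_eq_prod_map_map hT.aemeasurable hh.aemeasurable).1 hind
  have h1 : μ {ω | h ω > T ω} = (μ.map (fun ω => (T ω, h ω))) {q : ℝ × ℝ | q.1 < q.2} := by
    rw [Measure.map_apply (hT.prodMk hh) hs]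
    rfl
  rw [h1, hmap, Measure.prod_apply hs]
  have h2 : ∀ t : ℝ, (μ.map h) (Prod.mk t ⁻¹' {q : ℝ × ℝ | q.1 < q.2}) = μ {ω | h ω > t} := by
    intro t
    have : (Prod.mk t ⁻¹' {q : ℝ × ℝ | q.1 < q.2}) = Ioi t := rfl
    rw [this, Measure.map_apply hh measurableSet_Ioi]
    rfl
  simp_rw [h2]
  have hae : ∀ᵐ t ∂(μ.map T), 0 ≤ t := by
    rw [ae_map_iff hT.aemeasurable measurableSet_Ici]
    exact hTnn
  rw [lintegral_congr_ae (g := fun t => ENNReal.ofReal (Real.exp (-t)))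
    (hae.mono fun t ht => htail t ht)]
  exact lintegral_map (f := fun t => ENNReal.ofReal (Real.exp (-t)))
    (ENNReal.measurable_ofReal.comp (Real.measurable_exp.comp measurable_neg)) hT


theorem stmt_4 {Ω : Type*} [MeasurableSpace Ω] (μ : Measure Ω) [IsProbabilityMeasure μ]
    {ι : Type*} [Fintype ι]
    (h : Ω → ℝ) (hs Bs : ι → Ω → ℝ)
    (hhmeas : Measurable h) (hhsmeas : ∀ i, Measurable (hs i))
    (hBsmeas : ∀ i, Measurable (Bs i))
    (p : ℝ) (hp : p ∈ Set.Icc (0 : ℝ) 1)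
    (hindep : iIndepFun
      (Sum.elim (fun _ : Unit => h) (Sum.elim hs Bs)) μ)
    (hhtail : ∀ x : ℝ, 0 ≤ x → μ {ω | h ω > x} = ENNReal.ofReal (Real.exp (-x)))
    (hhstail : ∀ i, ∀ x : ℝ, 0 ≤ x → μ {ω | hs i ω > x} = ENNReal.ofReal (Real.exp (-x)))
    (hB1 : ∀ i, μ {ω | Bs i ω = 1} = ENNReal.ofReal p)
    (hB0 : ∀ i, μ {ω | Bs i ω = 0} = ENNReal.ofReal (1 - p))
    (c : ℝ) (hc : 0 ≤ c) (a : ι → ℝ) (ha : ∀ i, 0 ≤ a i) :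
    μ {ω | h ω > c * ∑ i, Bs i ω * hs i ω * a i} =
      ENNReal.ofReal (∏ i, (p / (1 + c * a i) + (1 - p))) := by
  classical
  set f : Unit ⊕ ι ⊕ ι → Ω → ℝ := Sum.elim (fun _ => h) (Sum.elim hs Bs) with hf
  have hfmeas : ∀ x, Measurable (f x) := by
    rintro (_ | x | x)
    exacts [hhmeas, hhsmeas x, hBsmeas x]
  set T : Ω → ℝ := fun ω => c * ∑ i, Bs i ω * hs i ω * a i with hTdef
  have hTmeas : Measurable T :=
    measurable_const.mul (Finset.measurable_sum _ fun i _ =>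
      (((hBsmeas i).mul (hhsmeas i)).mul_const _))
  -- a.e. facts
  have haeB : ∀ᵐ ω ∂μ, ∀ i, Bs i ω = 0 ∨ Bs i ω = 1 := by
    rw [ae_all_iff]
    intro i
    have hms0 : MeasurableSet {ω | Bs i ω = 0} := hBsmeas i (measurableSet_singleton 0)
    have hms1 : MeasurableSet {ω | Bs i ω = 1} := hBsmeas i (measurableSet_singleton 1)
    have hdisj : Disjoint {ω | Bs i ω = 0} {ω | Bs i ω = 1} := by
      rw [Set.disjoint_left]; intro ω h0 h1
      simp only [Set.mem_setOf_eq] at h0 h1; rw [h0] at h1; norm_num at h1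
    have hunion : μ ({ω | Bs i ω = 0} ∪ {ω | Bs i ω = 1}) = 1 := by
      rw [measure_union hdisj hms1, hB0 i, hB1 i,
        ← ENNReal.ofReal_add (by linarith [hp.2]) hp.1]
      norm_num
    have hcompl : μ ({ω | Bs i ω = 0} ∪ {ω | Bs i ω = 1})ᶜ = 0 := by
      rw [measure_compl (hms0.union hms1) (measure_ne_top _ _), hunion, measure_univ,
        tsub_self]
    have hseteq : {ω | ¬(Bs i ω = 0 ∨ Bs i ω = 1)} =
        ({ω | Bs i ω = 0} ∪ {ω | Bs i ω = 1})ᶜ := by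
      ext ω; simp [not_or]
    rw [ae_iff, hseteq]; exact hcompl
  have haeh : ∀ᵐ ω ∂μ, ∀ i, 0 < hs i ω := by
    rw [ae_all_iff]
    intro i
    have h1 : μ {ω | hs i ω > 0} = 1 := by
      rw [hhstail i 0 le_rfl]; norm_num
    have : μ {ω | hs i ω > 0}ᶜ = 0 := by
      rw [measure_compl (measurableSet_lt measurable_const (hhsmeas i)) (measure_ne_top _ _),
        h1, measure_univ, tsub_self]
    have hseteq : {ω | ¬ 0 < hs i ω} = {ω | hs i ω > 0}ᶜ := by
      ext ω; simp
    rw [ae_iff, hseteq]; exact this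
  have hTnn : 0 ≤ᵐ[μ] T := by
    filter_upwards [haeB, haeh] with ω hB hh'
    have : ∀ i ∈ Finset.univ, 0 ≤ Bs i ω * hs i ω * a i := by
      intro i _
      have hB' : 0 ≤ Bs i ω := by
        rcases hB i with h0 | h1
        · simp [h0]
        · simp [h1]
      exact mul_nonneg (mul_nonneg hB' (hh' i).le) (ha i)
    exact mul_nonneg hc (Finset.sum_nonneg this)
  -- independence of T and h
  have hindTh : IndepFun T h μ := by
    have hd : Disjoint (({Sum.inl ()} : Finset (Unit ⊕ ι ⊕ ι))ᶜ) {Sum.inl ()} :=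
      disjoint_compl_left
    have base := hindep.indepFun_finset _ _ hd hfmeas
    have hφm : Measurable (fun v : (∀ _ : (({Sum.inl ()} : Finset (Unit ⊕ ι ⊕ ι))ᶜ : Finset _), ℝ) =>
        c * ∑ i : ι, v ⟨Sum.inr (Sum.inr i), by simp⟩ * v ⟨Sum.inr (Sum.inl i), by simp⟩ * a i) :=
      by fun_prop
    have hψm : Measurable (fun v : (∀ _ : (({Sum.inl ()} : Finset (Unit ⊕ ι ⊕ ι)) : Finset _), ℝ) =>
        v ⟨Sum.inl (), by simp⟩) := by fun_prop
    exact base.comp hφm hψm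
  set G : ι → Ω → ℝ≥0∞ :=
    fun i ω => ENNReal.ofReal (Real.exp (-(c * a i * (Bs i ω * hs i ω)))) with hGdef
  have hGmeas : ∀ i, Measurable (G i) := fun i =>
    ENNReal.measurable_ofReal.comp (Real.measurable_exp.comp
      ((measurable_const.mul ((hBsmeas i).mul (hhsmeas i))).neg))
  -- step 2 : pointwise factorization
  have hfact : ∀ ω, ENNReal.ofReal (Real.exp (-T ω)) = ∏ i, G i ω := by
    intro ω
    have e1 : -T ω = ∑ i, -(c * a i * (Bs i ω * hs i ω)) := by
      rw [hTdef]; simp only []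
      rw [Finset.mul_sum, ← Finset.sum_neg_distrib]
      exact Finset.sum_congr rfl fun i _ => by ring
    rw [e1, Real.exp_sum, ENNReal.ofReal_prod_of_nonneg fun i _ => (Real.exp_pos _).le]
  -- step 3 : product of integrals
  have key3 : ∀ F : Finset ι, ∫⁻ ω, ∏ i ∈ F, G i ω ∂μ = ∏ i ∈ F, ∫⁻ ω, G i ω ∂μ := by
    intro F
    induction F using Finset.induction_on with
    | empty => simp
    | @insert j F hj ih =>
      have hattach : ∀ ω, ∏ i ∈ F, G i ω = ∏ i ∈ F.attach, G i.1 ω :=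
        fun ω => (Finset.prod_attach F fun i => G i ω).symm
      have hIF : IndepFun (G j) (fun ω => ∏ i ∈ F.attach, G i.1 ω) μ := by
        set S1 : Finset (Unit ⊕ ι ⊕ ι) := {Sum.inr (Sum.inl j), Sum.inr (Sum.inr j)} with hS1
        set S2 : Finset (Unit ⊕ ι ⊕ ι) :=
          F.image (fun i => Sum.inr (Sum.inl i)) ∪ F.image (fun i => Sum.inr (Sum.inr i))
          with hS2
        have hd : Disjoint S1 S2 := by
          rw [Finset.disjoint_left]
          intro x hx1 hx2
          simp only [hS1, hS2, Finset.mem_insert, Finset.mem_singleton, Finset.mem_union,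
            Finset.mem_image] at hx1 hx2
          rcases hx1 with rfl | rfl <;> rcases hx2 with ⟨i, hi, hix⟩ | ⟨i, hi, hix⟩ <;>
            simp_all
        have base := hindep.indepFun_finset S1 S2 hd hfmeas
        have hm1 : Measurable (fun v : (∀ _ : (S1 : Finset (Unit ⊕ ι ⊕ ι)), ℝ) =>
            ENNReal.ofReal (Real.exp (-(c * a j *
              (v ⟨Sum.inr (Sum.inr j), by simp [hS1]⟩ *
               v ⟨Sum.inr (Sum.inl j), by simp [hS1]⟩))))) := by fun_prop
        have hm2 : Measurable (fun v : (∀ _ : (S2 : Finset (Unit ⊕ ι ⊕ ι)), ℝ) =>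
            ∏ i ∈ F.attach, ENNReal.ofReal (Real.exp (-(c * a i.1 *
              (v ⟨Sum.inr (Sum.inr i.1),
                  Finset.mem_union_right _ (Finset.mem_image_of_mem _ i.2)⟩ *
               v ⟨Sum.inr (Sum.inl i.1),
                  Finset.mem_union_left _ (Finset.mem_image_of_mem _ i.2)⟩))))) := by
          apply Finset.measurable_prod
          intro i _
          fun_prop
        exact base.comp hm1 hm2
      simp_rw [Finset.prod_insert hj, hattach]
      have hm2' : Measurable (fun ω => ∏ i ∈ F.attach, G i.1 ω) :=
        Finset.measurable_prod _ fun i _ => hGmeas i.1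
      trans (∫⁻ ω, G j ω ∂μ) * ∫⁻ ω, ∏ i ∈ F.attach, G i.1 ω ∂μ
      · exact lintegral_mul_eq_lintegral_mul_lintegral_of_indepFun (hGmeas j) hm2' hIF
      · rw [lintegral_congr (fun ω => (hattach ω).symm), ih]
  -- step 4 : single integral
  have key4 : ∀ i, ∫⁻ ω, G i ω ∂μ = ENNReal.ofReal (p / (1 + c * a i) + (1 - p)) := by
    intro i
    have hlnn : 0 ≤ c * a i := mul_nonneg hc (ha i)
    have h1ca : (0:ℝ) < 1 + c * a i := by nlinarith
    set ind0 : ℝ → ℝ≥0∞ := fun x => ({(0:ℝ)} : Set ℝ).indicator (fun _ => (1:ℝ≥0∞)) x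
      with hind0
    set ind1 : ℝ → ℝ≥0∞ := fun x => ({(1:ℝ)} : Set ℝ).indicator (fun _ => (1:ℝ≥0∞)) x
      with hind1
    have hind0m : Measurable ind0 := measurable_const.indicator (measurableSet_singleton _)
    have hind1m : Measurable ind1 := measurable_const.indicator (measurableSet_singleton _)
    set E : Ω → ℝ≥0∞ := fun ω => ENNReal.ofReal (Real.exp (-(c * a i * hs i ω))) with hE
    have hEmeas : Measurable E := by fun_prop
    have haeeq : (fun ω => G i ω) =ᵐ[μ] fun ω => ind0 (Bs i ω) + ind1 (Bs i ω) * E ω := by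
      filter_upwards [haeB] with ω hw
      rcases hw i with h0 | h1
      · simp [hGdef, hind0, hind1, h0, Set.indicator_apply]
      · simp [hGdef, hind0, hind1, hE, h1, Set.indicator_apply]
    rw [lintegral_congr_ae haeeq, lintegral_add_left (show Measurable fun ω => ind0 (Bs i ω) from hind0m.comp (hBsmeas i))]
    have hA : ∫⁻ ω, ind0 (Bs i ω) ∂μ = ENNReal.ofReal (1 - p) := by
      have e0 : (fun ω => ind0 (Bs i ω)) = (Bs i ⁻¹' {0}).indicator (fun _ => (1:ℝ≥0∞)) := by
        funext ω; by_cases hb : Bs i ω = 0 <;> simp [hind0, hb, Set.indicator_apply]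
      rw [e0, lintegral_indicator (hBsmeas i (measurableSet_singleton 0)), setLIntegral_const,
        one_mul]
      exact hB0 i
    have hB' : ∫⁻ ω, ind1 (Bs i ω) * E ω ∂μ =
        ENNReal.ofReal p * ENNReal.ofReal (1 / (1 + c * a i)) := by
      have hIind : IndepFun (fun ω => ind1 (Bs i ω)) E μ := by
        have hne : (Sum.inr (Sum.inr i) : Unit ⊕ ι ⊕ ι) ≠ Sum.inr (Sum.inl i) := by simp
        have base := hindep.indepFun hne
        exact base.comp hind1m (by fun_prop :
          Measurable (fun x : ℝ => ENNReal.ofReal (Real.exp (-(c * a i * x)))))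
      calc ∫⁻ ω, ind1 (Bs i ω) * E ω ∂μ
          = (∫⁻ ω, ind1 (Bs i ω) ∂μ) * ∫⁻ ω, E ω ∂μ :=
            lintegral_mul_eq_lintegral_mul_lintegral_of_indepFun
              (hind1m.comp (hBsmeas i)) hEmeas hIind
        _ = ENNReal.ofReal p * ENNReal.ofReal (1 / (1 + c * a i)) := by
            have e1 : (fun ω => ind1 (Bs i ω)) =
                (Bs i ⁻¹' {1}).indicator (fun _ => (1:ℝ≥0∞)) := by
              funext ω; by_cases hb : Bs i ω = 1 <;> simp [hind1, hb, Set.indicator_apply]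
            rw [e1, lintegral_indicator (hBsmeas i (measurableSet_singleton 1)),
              setLIntegral_const, one_mul,
              aux_exp_moment μ (hs i) (hhsmeas i) (hhstail i) (c * a i) hlnn]
            congr 1
            exact hB1 i
    rw [hA, hB', ← ENNReal.ofReal_mul hp.1,
      ← ENNReal.ofReal_add (by linarith [hp.2]) (mul_nonneg hp.1 (by positivity))]
    congr 1
    ring
  -- assemble
  have hgoal : μ {ω | h ω > T ω} = ENNReal.ofReal (∏ i, (p / (1 + c * a i) + (1 - p))) := by
    rw [aux_prob_gt μ h T hhmeas hTmeas hindTh hTnn hhtail]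
    rw [lintegral_congr hfact, key3 Finset.univ, Finset.prod_congr rfl fun i _ => key4 i,
      ← ENNReal.ofReal_prod_of_nonneg]
    intro i _
    have h1 : (0:ℝ) ≤ 1 + c * a i := by nlinarith [mul_nonneg hc (ha i)]
    have := hp.1; have := hp.2
    have h2 : (0:ℝ) ≤ p / (1 + c * a i) := div_nonneg hp.1 h1
    linarith
  exact hgoal
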